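/- Let n ≥ 1 and let A, B, C, D be integers with A·B·D odd. Then the number of pairs (x,y) ∈ (ℤ/2ⁿℤ)² satisfying Ax² + Bxy + Cy² ≡ D (mod 2ⁿ) equals 2^(n−1) if C is even, and 3·2^(n−1) if C is odd. -/

import Mathlib

open Finset

private def sol (m : ℕ) [NeZero m] (A B C D : ℤ) : Finset (ZMod m × ZMod m) :=
  univ.filter (fun p => (A : ZMod m) * p.1 ^ 2 + (B : ZMod m) * p.1 * p.2
      + (C : ZMod m) * p.2 ^ 2 = (D : ZMod m))

private lemma ker_lem (m : ℕ) (hm0 : m ≠ 0) (z : ZMod (m*2)) :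
    ZMod.castHom ⟨2, rfl⟩ (ZMod m) z = 0 ↔ z = 0 ∨ z = (m : ZMod (m*2)) := by
  haveI : NeZero (m*2) := ⟨by omega⟩
  have hval : ∀ w : ZMod (m*2), ZMod.castHom (⟨2, rfl⟩ : m ∣ m*2) (ZMod m) w = ((w.val : ℕ) : ZMod m) := by
    intro w
    rw [ZMod.castHom_apply, ← ZMod.natCast_val]
  rw [hval]
  constructor
  · intro hz
    have h2 : m ∣ z.val := (ZMod.natCast_eq_zero_iff _ _).mp hz
    have h3 : z.val < m * 2 := ZMod.val_lt z
    have h4 : z.val = 0 ∨ z.val = m := by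
      obtain ⟨k, hk⟩ := h2
      have hk2 : k < 2 := by nlinarith [Nat.pos_of_ne_zero hm0]
      interval_cases k <;> omega
    have h5 : ((z.val : ℕ) : ZMod (m*2)) = z := by
      rw [ZMod.natCast_val, ZMod.cast_id]
    rcases h4 with h | h <;> [left; right] <;> rw [← h5, h] <;> simp
  · rintro (rfl | rfl)
    · simp
    · have : ((m : ZMod (m*2))).val = m := ZMod.val_natCast_of_lt (by omega)
      rw [this]
      simp

private lemma mul_ker_lem (m : ℕ) (hm0 : m ≠ 0) (w : ZMod (m*2)) :
    (m : ZMod (m*2)) * w = 0 ↔ ZMod.castHom (⟨m, mul_comm m 2⟩ : 2 ∣ m*2) (ZMod 2) w = 0 := by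
  haveI : NeZero (m*2) := ⟨by omega⟩
  have hw : ((w.val : ℕ) : ZMod (m*2)) = w := by rw [ZMod.natCast_val, ZMod.cast_id]
  have key : (m : ZMod (m*2)) * w = ((m * w.val : ℕ) : ZMod (m*2)) := by
    rw [Nat.cast_mul, hw]
  have hval : ZMod.castHom (⟨m, mul_comm m 2⟩ : 2 ∣ m*2) (ZMod 2) w = ((w.val : ℕ) : ZMod 2) := by
    rw [ZMod.castHom_apply, ← ZMod.natCast_val]
  rw [key, hval, ZMod.natCast_eq_zero_iff, ZMod.natCast_eq_zero_iff]
  constructor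
  · rintro ⟨k, hk⟩
    have hm := Nat.pos_of_ne_zero hm0
    exact ⟨k, by nlinarith⟩
  · rintro ⟨k, hk⟩
    exact ⟨k, by rw [hk]; ring⟩

private lemma mul_eq_mul_lem (m : ℕ) (hm0 : m ≠ 0) (w w' : ZMod (m*2)) :
    (m : ZMod (m*2)) * w = (m : ZMod (m*2)) * w' ↔
      ZMod.castHom (⟨m, mul_comm m 2⟩ : 2 ∣ m*2) (ZMod 2) w
        = ZMod.castHom (⟨m, mul_comm m 2⟩ : 2 ∣ m*2) (ZMod 2) w' := by
  rw [← sub_eq_zero, ← mul_sub, mul_ker_lem m hm0, map_sub, sub_eq_zero]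

private lemma zmod2_cases (s : ZMod 2) : s = 0 ∨ s = 1 := by revert s; decide

private lemma count2 : ∀ u v c : ZMod 2, ¬(u = 0 ∧ v = 0) →
    (univ.filter (fun st : ZMod 2 × ZMod 2 => st.1 * u + st.2 * v = c)).card = 2 := by decide

private lemma odd_cast2 (d : ℤ) (hd : Odd d) : (d : ZMod 2) = 1 := by
  rcases zmod2_cases (d : ZMod 2) with h | h
  · exfalso
    rw [ZMod.intCast_zmod_eq_zero_iff_dvd] at h
    rw [Int.odd_iff] at hd
    omega
  · exact h

private lemma fiber_card (m : ℕ) (hm0 : m ≠ 0) (hm2 : 2 ∣ m) [NeZero m] [NeZero (m*2)]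
    (A B C D : ℤ) (hB : Odd B) (hD : Odd D) (p₀ : ZMod m × ZMod m)
    (hab : p₀ ∈ sol m A B C D) :
    ((sol (m*2) A B C D).filter (fun p : ZMod (m*2) × ZMod (m*2) =>
      (ZMod.castHom ⟨2, rfl⟩ (ZMod m) p.1, ZMod.castHom ⟨2, rfl⟩ (ZMod m) p.2) = p₀)).card
      = 2 := by
  obtain ⟨a, b⟩ := p₀
  set π : ZMod (m*2) →+* ZMod m := ZMod.castHom ⟨2, rfl⟩ (ZMod m) with hπdef
  set π₂ : ZMod (m*2) →+* ZMod 2 := ZMod.castHom ⟨m, mul_comm m 2⟩ (ZMod 2) with hπ₂def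
  set ι : ZMod 2 → ZMod (m*2) := fun s => ((s.val : ℕ) : ZMod (m*2)) with hιdef
  have hmm0 : (m : ZMod (m*2)) ≠ 0 := by
    intro hc
    rw [ZMod.natCast_eq_zero_iff] at hc
    have := Nat.le_of_dvd (Nat.pos_of_ne_zero hm0) hc
    omega
  have hmsq : (m : ZMod (m*2)) * (m : ZMod (m*2)) = 0 := by
    obtain ⟨k, hk⟩ := hm2
    rw [← Nat.cast_mul, ZMod.natCast_eq_zero_iff]
    exact ⟨k, by subst hk; ring⟩
  have hπ2m : π₂ (m : ZMod (m*2)) = 0 := by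
    rw [hπ₂def, map_natCast, ZMod.natCast_eq_zero_iff]
    exact hm2
  have hπ2ι : ∀ s : ZMod 2, π₂ (ι s) = s := by
    intro s
    rw [hιdef, hπ₂def, map_natCast, ZMod.natCast_val, ZMod.cast_id]
  have hι0 : ι (0 : ZMod 2) = 0 := by simp [hιdef]
  have hι1 : ι (1 : ZMod 2) = 1 := by
    rw [hιdef]
    norm_num [ZMod.val_one]
  set x₀ : ZMod (m*2) := ((a.val : ℕ) : ZMod (m*2)) with hx₀
  set y₀ : ZMod (m*2) := ((b.val : ℕ) : ZMod (m*2)) with hy₀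
  have hπx₀ : π x₀ = a := by rw [hx₀, hπdef, map_natCast, ZMod.natCast_val, ZMod.cast_id]
  have hπy₀ : π y₀ = b := by rw [hy₀, hπdef, map_natCast, ZMod.natCast_val, ZMod.cast_id]
  set f₀ : ZMod (m*2) := (A : ZMod (m*2)) * x₀ ^ 2 + (B : ZMod (m*2)) * x₀ * y₀
      + (C : ZMod (m*2)) * y₀ ^ 2 with hf₀
  set u : ZMod (m*2) := 2 * (A : ZMod (m*2)) * x₀ + (B : ZMod (m*2)) * y₀ with hu
  set v : ZMod (m*2) := (B : ZMod (m*2)) * x₀ + 2 * (C : ZMod (m*2)) * y₀ with hv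
  have hab' : (A : ZMod m) * a ^ 2 + (B : ZMod m) * a * b + (C : ZMod m) * b ^ 2
      = (D : ZMod m) := by simpa [sol] using hab
  have hker : π (f₀ - (D : ZMod (m*2))) = 0 := by
    rw [map_sub, hf₀]
    rw [map_add, map_add, map_mul, map_mul, map_mul, map_mul, map_pow, map_pow,
      map_intCast, map_intCast, map_intCast, map_intCast, hπx₀, hπy₀, hab', sub_self]
  obtain ⟨c, hc01, hc⟩ : ∃ c : ZMod (m*2), (c = 0 ∨ c = 1) ∧
      f₀ - (D : ZMod (m*2)) = (m : ZMod (m*2)) * c := by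
    rcases (ker_lem m hm0 _).mp hker with h | h
    · exact ⟨0, Or.inl rfl, by rw [h]; ring⟩
    · exact ⟨1, Or.inr rfl, by rw [h]; ring⟩
  have key : ∀ s t : ZMod 2,
      (A : ZMod (m*2)) * (x₀ + m * ι s) ^ 2 + (B : ZMod (m*2)) * (x₀ + m * ι s) * (y₀ + m * ι t)
        + (C : ZMod (m*2)) * (y₀ + m * ι t) ^ 2
      = f₀ + (m : ZMod (m*2)) * (ι s * u + ι t * v) := by
    intro s t
    rw [hf₀, hu, hv]
    linear_combination ((A : ZMod (m*2)) * ι s ^ 2 + (B : ZMod (m*2)) * ι s * ι t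
      + (C : ZMod (m*2)) * ι t ^ 2) * hmsq
  have equiv : ∀ s t : ZMod 2,
      ((A : ZMod (m*2)) * (x₀ + m * ι s) ^ 2 + (B : ZMod (m*2)) * (x₀ + m * ι s) * (y₀ + m * ι t)
        + (C : ZMod (m*2)) * (y₀ + m * ι t) ^ 2 = (D : ZMod (m*2)))
      ↔ s * π₂ u + t * π₂ v = π₂ c := by
    intro s t
    rw [key s t]
    constructor
    · intro hh
      have h2 : (m : ZMod (m*2)) * (ι s * u + ι t * v) = (m : ZMod (m*2)) * (-c) := by
        linear_combination hh - hc
      have h3 := (mul_eq_mul_lem m hm0 _ _).mp h2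
      rw [← hπ₂def] at h3
      rw [map_add, map_mul, map_mul, hπ2ι, hπ2ι, map_neg, CharTwo.neg_eq] at h3
      exact h3
    · intro hh
      have h3 : π₂ (ι s * u + ι t * v) = π₂ (-c) := by
        rw [map_add, map_mul, map_mul, hπ2ι, hπ2ι, map_neg, CharTwo.neg_eq]
        exact hh
      rw [hπ₂def] at h3
      have h2 := (mul_eq_mul_lem m hm0 _ _).mpr h3
      linear_combination h2 + hc
  have hrep : ∀ (x : ZMod (m*2)) (w : ZMod m) (w₀ : ZMod (m*2)), π w₀ = w → π x = w →
      x = w₀ + m * ι (if x = w₀ then 0 else 1) := by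
    intro x w w₀ hw₀ hx
    have hk : π (x - w₀) = 0 := by rw [map_sub, hw₀, hx, sub_self]
    rcases (ker_lem m hm0 _).mp hk with h | h
    · have hxw : x = w₀ := by linear_combination h
      rw [if_pos hxw, hι0, mul_zero, add_zero, hxw]
    · have hxw : x = w₀ + m := by linear_combination h
      have hne : x ≠ w₀ := by
        rw [hxw]
        intro hcon
        exact hmm0 (by linear_combination hcon)
      rw [if_neg hne, hι1, mul_one, hxw]
  -- nonvanishing of gradient mod 2
  have hB2 : π₂ ((B : ZMod (m*2))) = 1 := by
    rw [hπ₂def, map_intCast]; exact odd_cast2 B hB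
  have h2Z : π₂ (2 : ZMod (m*2)) = 0 := by
    rw [hπ₂def, map_ofNat]; decide
  have hπ2uv : ¬(π₂ u = 0 ∧ π₂ v = 0) := by
    rintro ⟨h1, h2⟩
    have h1' : π₂ y₀ = 0 := by simpa [hu, map_add, map_mul, h2Z, hB2] using h1
    have h2' : π₂ x₀ = 0 := by simpa [hv, map_add, map_mul, h2Z, hB2] using h2
    have hf2 : π₂ f₀ = 1 := by
      have hfD : f₀ = (D : ZMod (m*2)) + (m : ZMod (m*2)) * c := by linear_combination hc
      rw [hfD, map_add, map_mul, hπ2m, zero_mul, add_zero, hπ₂def, map_intCast,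
        odd_cast2 D hD]
    rw [hf₀, map_add, map_add, map_mul, map_mul, map_mul, map_mul, map_pow, map_pow,
      h1', h2'] at hf2
    simp at hf2
  -- the bijection
  refine Eq.trans ?_ (count2 (π₂ u) (π₂ v) (π₂ c) hπ2uv)
  apply Finset.card_bij'
    (i := fun p _ => ((if p.1 = x₀ then 0 else 1 : ZMod 2), (if p.2 = y₀ then 0 else 1 : ZMod 2)))
    (j := fun st _ => (x₀ + (m : ZMod (m*2)) * ι st.1, y₀ + (m : ZMod (m*2)) * ι st.2))
  · intro p hp
    simp only [Finset.mem_filter, sol, Finset.mem_univ, true_and, Prod.mk.injEq] at hp ⊢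
    obtain ⟨heq, hpa, hpb⟩ := hp
    have h1 := hrep p.1 a x₀ hπx₀ hpa
    have h2 := hrep p.2 b y₀ hπy₀ hpb
    apply (equiv _ _).mp
    rw [← h1, ← h2]
    exact heq
  · intro st hst
    simp only [Finset.mem_filter, sol, Finset.mem_univ, true_and, Prod.mk.injEq] at hst ⊢
    have hπm : π (m : ZMod (m*2)) = 0 := by rw [hπdef, map_natCast, ZMod.natCast_self]
    refine ⟨(equiv st.1 st.2).mpr hst, ?_, ?_⟩ <;>
      rw [map_add, map_mul, hπm, zero_mul, add_zero] <;> [exact hπx₀; exact hπy₀]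
  · intro p hp
    simp only [Finset.mem_filter, sol, Finset.mem_univ, true_and, Prod.mk.injEq] at hp
    obtain ⟨heq, hpa, hpb⟩ := hp
    have h1 := hrep p.1 a x₀ hπx₀ hpa
    have h2 := hrep p.2 b y₀ hπy₀ hpb
    exact Prod.ext h1.symm h2.symm
  · intro st hst
    have comp : ∀ (w : ZMod (m*2)) (s : ZMod 2),
        (if w + (m : ZMod (m*2)) * ι s = w then (0:ZMod 2) else 1) = s := by
      intro w s
      rcases zmod2_cases s with rfl | rfl
      · rw [hι0, mul_zero, add_zero, if_pos rfl]
      · rw [hι1, mul_one, if_neg ?_]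
        intro hcon
        exact hmm0 (by linear_combination hcon)
    exact Prod.ext (comp x₀ st.1) (comp y₀ st.2)

private lemma step_lem (m : ℕ) (hm0 : m ≠ 0) (hm2 : 2 ∣ m) [NeZero m] [NeZero (m*2)]
    (A B C D : ℤ) (hB : Odd B) (hD : Odd D) :
    (sol (m*2) A B C D).card = 2 * (sol m A B C D).card := by
  rw [Finset.card_eq_sum_card_fiberwise (f := fun p : ZMod (m*2) × ZMod (m*2) =>
      (ZMod.castHom ⟨2, rfl⟩ (ZMod m) p.1, ZMod.castHom ⟨2, rfl⟩ (ZMod m) p.2))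
      (t := sol m A B C D) ?_]
  · rw [Finset.sum_congr rfl (fun p hp => fiber_card m hm0 hm2 A B C D hB hD p hp)]
    rw [Finset.sum_const, smul_eq_mul, mul_comm]
  · intro p hp
    simp only [sol, Finset.mem_coe, Finset.mem_filter, Finset.mem_univ, true_and] at hp ⊢
    have := congrArg (ZMod.castHom (⟨2, rfl⟩ : m ∣ m*2) (ZMod m)) hp
    rw [map_add, map_add, map_mul, map_mul, map_mul, map_mul, map_pow, map_pow,
      map_intCast, map_intCast, map_intCast, map_intCast] at this
    exact this

private lemma sol_card (n : ℕ) (hn : 1 ≤ n) (A B C D : ℤ) (hA : Odd A) (hB : Odd B)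
    (hD : Odd D) :
    haveI : NeZero ((2:ℕ)^n) := ⟨pow_ne_zero n two_ne_zero⟩
    (sol (2^n) A B C D).card = (if Even C then 1 else 3) * 2^(n-1) := by
  haveI : ∀ k : ℕ, NeZero ((2:ℕ)^k) := fun k => ⟨pow_ne_zero k two_ne_zero⟩
  induction n, hn using Nat.le_induction with
  | base =>
    have hA2 : (A : ZMod 2) = 1 := odd_cast2 A hA
    have hB2 : (B : ZMod 2) = 1 := odd_cast2 B hB
    have hD2 : (D : ZMod 2) = 1 := odd_cast2 D hD
    show (sol 2 A B C D).card = _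
    by_cases hC : Even C
    · have hC2 : (C : ZMod 2) = 0 := by
        rw [ZMod.intCast_zmod_eq_zero_iff_dvd]
        exact hC.two_dvd
      simp only [sol, hA2, hB2, hC2, hD2, if_pos hC]
      decide
    · have hC2 : (C : ZMod 2) = 1 := odd_cast2 C (Int.not_even_iff_odd.mp hC)
      simp only [sol, hA2, hB2, hC2, hD2, if_neg hC]
      decide
  | succ k hk ih =>
    show (sol (2^k * 2) A B C D).card = _
    rw [step_lem (2^k) (pow_ne_zero k two_ne_zero) (dvd_pow_self 2 (by omega)) A B C D hB hD, ih]
    obtain ⟨k', rfl⟩ : ∃ k', k = k' + 1 := ⟨k - 1, by omega⟩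
    simp only [Nat.add_sub_cancel]
    ring

theorem count_quadratic_odd_ABD (n : ℕ) (hn : 1 ≤ n) (A B C D : ℤ)
    (h : Odd (A * B * D)) :
    Nat.card {xy : ZMod (2 ^ n) × ZMod (2 ^ n) //
        (A : ZMod (2 ^ n)) * xy.1 ^ 2 + (B : ZMod (2 ^ n)) * xy.1 * xy.2
          + (C : ZMod (2 ^ n)) * xy.2 ^ 2 = (D : ZMod (2 ^ n))} =
      if Even C then 2 ^ (n - 1) else 3 * 2 ^ (n - 1) := by
  rw [Int.odd_mul, Int.odd_mul] at h
  obtain ⟨⟨hA, hB⟩, hD⟩ := h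
  haveI : NeZero ((2:ℕ)^n) := ⟨pow_ne_zero n two_ne_zero⟩
  rw [Nat.card_eq_fintype_card, Fintype.card_subtype]
  have := sol_card n hn A B C D hA hB hD
  rw [show (Finset.filter (fun xy : ZMod (2^n) × ZMod (2^n) =>
      (A : ZMod (2 ^ n)) * xy.1 ^ 2 + (B : ZMod (2 ^ n)) * xy.1 * xy.2
          + (C : ZMod (2 ^ n)) * xy.2 ^ 2 = (D : ZMod (2 ^ n))) Finset.univ)
      = sol (2^n) A B C D from rfl, this]
  by_cases hC : Even C <;> simp [hC]
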